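/- Closed choice C_N is Weihrauch equivalent to the map max : ⊆ O(N) → N sending a nonempty finite open subset of N (given by enumeration) to its maximum. -/

import Mathlib

/- Common background: type-two computability on Baire space, represented spaces
(representations as functional relations), Weihrauch reducibility, Cantor space,
Martin-Löf tests, Martin-Löf randomness, and the basic multivalued functions
`C_ℕ`, `d_MLR`, `LAY`, the layer map and layerwise computability. -/

namespace WL

abbrev Baire : Type := ℕ → ℕ
abbrev Cantor : Type := ℕ → Bool

/-- The initial segment of length `m` of a point of Baire space. -/
def initSeg (p : Baire) (m : ℕ) : List ℕ := (List.range m).map p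

/-- `l` is a prefix of the sequence `p`. -/
def PrefixOfFun (l : List ℕ) (p : Baire) : Prop := ∀ i : Fin l.length, l.get i = p i

/-- `F` is a computable (partial) function on Baire space, with domain (at least) `D`:
there is a computable monotone word function producing, on longer and longer prefixes of
an input `p ∈ D`, longer and longer prefixes of `F p`. -/
def ComputableOn (F : Baire → Baire) (D : Set Baire) : Prop :=
  ∃ φ : List ℕ → List ℕ, Computable φ ∧ (∀ l l' : List ℕ, l <+: l' → φ l <+: φ l') ∧
    ∀ p ∈ D, (∀ m, PrefixOfFun (φ (initSeg p m)) (F p)) ∧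
      ∀ n, ∃ m, n ≤ (φ (initSeg p m)).length

/-- Pairing on Baire space. -/
def pairB (p q : Baire) : Baire := fun n => if n % 2 = 0 then p (n / 2) else q (n / 2)

def evens (p : Baire) : Baire := fun n => p (2 * n)

def odds (p : Baire) : Baire := fun n => p (2 * n + 1)

/-- `F` is a realizer of the multivalued function `f`, w.r.t. representations
`δX`, `δY` (given as functional relations between names and points). -/
def Realizes {X Y : Type} (δX : Baire → X → Prop) (δY : Baire → Y → Prop)
    (f : X → Set Y) (F : Baire → Baire) : Prop :=
  ∀ p x, δX p x → (f x).Nonempty → ∃ y, δY (F p) y ∧ y ∈ f x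

/-- The names of points in the domain of the multivalued function `f`. -/
def domNames {X Y : Type} (δX : Baire → X → Prop) (f : X → Set Y) : Set Baire :=
  {p | ∃ x, δX p x ∧ (f x).Nonempty}

/-- Weihrauch reducibility `f ≤_W g`. -/
def WRed {X Y Z W : Type} (δX : Baire → X → Prop) (δY : Baire → Y → Prop)
    (δZ : Baire → Z → Prop) (δW : Baire → W → Prop)
    (f : X → Set Y) (g : Z → Set W) : Prop :=
  ∃ H K : Baire → Baire, ComputableOn H (domNames δX f) ∧
    ∀ G : Baire → Baire, Realizes δZ δW g G →
      ComputableOn K {r | ∃ p ∈ domNames δX f, r = pairB p (G (H p))} ∧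
      Realizes δX δY f fun p => K (pairB p (G (H p)))

/-- Weihrauch equivalence. -/
def WEquiv {X Y Z W : Type} (δX : Baire → X → Prop) (δY : Baire → Y → Prop)
    (δZ : Baire → Z → Prop) (δW : Baire → W → Prop)
    (f : X → Set Y) (g : Z → Set W) : Prop :=
  WRed δX δY δZ δW f g ∧ WRed δZ δW δX δY g f

/-- The multivalued function `f` is computable. -/
def ComputableMF {X Y : Type} (δX : Baire → X → Prop) (δY : Baire → Y → Prop)
    (f : X → Set Y) : Prop :=
  ∃ F : Baire → Baire, ComputableOn F (domNames δX f) ∧ Realizes δX δY f F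

/-- Representation of `ℕ`. -/
def repNat : Baire → ℕ → Prop := fun p n => p 0 = n

/-- Representation of Baire space. -/
def repBaire : Baire → Baire → Prop := fun p q => p = q

/-- Representation of Cantor space. -/
def repCantor : Baire → Cantor → Prop := fun p x => ∀ n, p n = if x n then 1 else 0

/-- Representation of closed subsets of `ℕ` by enumerations of their complements. -/
def repClosedNat : Baire → Set ℕ → Prop := fun p A => ∀ n, n ∈ A ↔ ¬ ∃ i, p i = n + 1

/-- Representation of open subsets of `ℕ` by enumerations. -/
def repOpenNat : Baire → Set ℕ → Prop := fun p A => ∀ n, n ∈ A ↔ ∃ i, p i = n + 1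

/-- Product representation. -/
def prodRep {X Z : Type} (δX : Baire → X → Prop) (δZ : Baire → Z → Prop) :
    Baire → X × Z → Prop := fun p xz => δX (evens p) xz.1 ∧ δZ (odds p) xz.2

/-- Representation of countable powers. -/
def seqRep {X : Type} (δX : Baire → X → Prop) : Baire → (ℕ → X) → Prop :=
  fun p xs => ∀ i, δX (fun n => p (Nat.pair i n)) (xs i)

/-- Product of multivalued functions. -/
def prodMF {X Y Z W : Type} (f : X → Set Y) (g : Z → Set W) : X × Z → Set (Y × W) :=
  fun xz => f xz.1 ×ˢ g xz.2

/-- Composition of multivalued functions (with the usual domain condition). -/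
def compMF {X Y Z : Type} (g : Y → Set Z) (f : X → Set Y) : X → Set Z :=
  fun x => {z | (∀ y ∈ f x, (g y).Nonempty) ∧ ∃ y ∈ f x, z ∈ g y}

/-- The cylinder of a finite binary word. -/
def cyl (w : List Bool) : Set Cantor := {x | ∀ i : Fin w.length, x i = w.get i}

/-- Decoding a natural number as a finite binary word. -/
def wordOf (k : ℕ) : List Bool := (Encodable.decode (α := List Bool) k).getD []

/-- The open subset of Cantor space enumerated by `p` (as a union of cylinders). -/
def openOf (p : Baire) : Set Cantor :=
  ⋃ i, if p i = 0 then (∅ : Set Cantor) else cyl (wordOf (p i - 1))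

/-- Representation of open subsets of Cantor space. -/
def repOpenCantor : Baire → Set Cantor → Prop := fun p U => U = openOf p

/-- Representation of closed subsets of Cantor space. -/
def repClosedCantor : Baire → Set Cantor → Prop := fun p A => A = (openOf p)ᶜ

/-- The number of binary words of length `n` whose cylinder is contained in `U`. -/
noncomputable def cylCount (U : Set Cantor) (n : ℕ) : ℕ :=
  Nat.card {w : Fin n → Bool // cyl (List.ofFn w) ⊆ U}

/-- For an open set `U`, `lebLe U i` expresses `λ(U) ≤ 2^{-i}` for the uniform measure. -/
def lebLe (U : Set Cantor) (i : ℕ) : Prop := ∀ n, 2 ^ i * cylCount U n ≤ 2 ^ n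

/-- A Martin-Löf test: a computable sequence of (codes of) open sets `U_i` with
`λ(U_i) ≤ 2^{-i}`. -/
structure MLTest where
  e : ℕ → ℕ → ℕ
  comp : Computable₂ e
  meas : ∀ i, lebLe (openOf (e i)) i

/-- The `i`-th level of a Martin-Löf test. -/
def MLTest.U (T : MLTest) (i : ℕ) : Set Cantor := openOf (T.e i)

/-- Martin-Löf randomness. -/
def MLRandom (x : Cantor) : Prop := ∀ T : MLTest, ∃ i, x ∉ T.U i

/-- A universal Martin-Löf test. -/
def MLTest.Universal (T : MLTest) : Prop := ∀ T' : MLTest, (⋂ i, T'.U i) ⊆ ⋂ i, T.U i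

/-- Closed choice on the naturals, as a multivalued function on `A(ℕ)`. -/
def CN : Set ℕ → Set ℕ := fun A => A

/-- `d_MLR : MLR → {1}`. -/
def dMLR : Cantor → Set ℕ := fun x => {n | MLRandom x ∧ n = 1}

/-- The degree `LAY = C_ℕ × d_MLR`. -/
def LAY : Set ℕ × Cantor → Set (ℕ × ℕ) := prodMF CN dMLR

abbrev repLAYin : Baire → Set ℕ × Cantor → Prop := prodRep repClosedNat repCantor
abbrev repPairNat : Baire → ℕ × ℕ → Prop := prodRep repNat repNat

/-- The layer map of a Martin-Löf test: `n ∈ Lay T x` iff `x ∉ U_n`. -/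
def Lay (T : MLTest) : Cantor → Set ℕ := fun x => {n | MLRandom x ∧ x ∉ T.U n}

/-- The randomness deficiency map: `RD T x = min {n | x ∉ U_n}`. -/
def RD (T : MLTest) : Cantor → Set ℕ := fun x => {n | MLRandom x ∧ IsLeast {m | x ∉ T.U m} n}

/-- `f : MLR ⇉ X` is layerwise computable w.r.t. the test `T`: some computable
`g(p, k)` produces a value in `f p` whenever `p ∉ U_k`. -/
def LayerwiseComputable (T : MLTest) {X : Type} (δX : Baire → X → Prop)
    (f : Cantor → Set X) : Prop :=
  ∃ G : Baire → Baire,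
    ComputableOn G {r | ∃ p x k, repCantor p x ∧ x ∉ T.U k ∧ (f x).Nonempty ∧
      r = pairB p fun _ => k} ∧
    ∀ p x k, repCantor p x → x ∉ T.U k → (f x).Nonempty →
      ∃ y, δX (G (pairB p fun _ => k)) y ∧ y ∈ f x

/-- Layerwise computability for multivalued functions with an additional input. -/
def LayerwiseComputable₂ (T : MLTest) {I X : Type} (δI : Baire → I → Prop)
    (δX : Baire → X → Prop) (f : Cantor × I → Set X) : Prop :=
  ∃ G : Baire → Baire,
    ComputableOn G {r | ∃ p q x i k, repCantor p x ∧ δI q i ∧ x ∉ T.U k ∧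
      (f (x, i)).Nonempty ∧ r = pairB (pairB p q) fun _ => k} ∧
    ∀ p q x i k, repCantor p x → δI q i → x ∉ T.U k → (f (x, i)).Nonempty →
      ∃ y, δX (G (pairB (pairB p q) fun _ => k)) y ∧ y ∈ f (x, i)

/-- `Σ_{i<|w|} (2 w(i) - 1)`: the signed count of a binary word. -/
def signedSum (w : List Bool) : ℤ := (w.count true : ℤ) - (w.count false : ℤ)

/-- The prefix of length `n` of a point of Cantor space. -/
def initBits (x : Cantor) (n : ℕ) : List Bool := List.ofFn fun i : Fin n => x i

/-- The maximum map on (nonempty, bounded) open subsets of `ℕ`. -/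
def maxON : Set ℕ → Set ℕ := fun U => {n | IsGreatest U n}

lemma initSeg_length (p : Baire) (m : ℕ) : (initSeg p m).length = m := by
  simp [initSeg]

lemma initSeg_getD {p : Baire} {m i : ℕ} (h : i < m) : (initSeg p m).getD i 0 = p i := by
  rw [List.getD_eq_getElem _ _ (by simpa [initSeg] using h)]
  simp [initSeg]

lemma initSeg_prefix (p : Baire) {m m' : ℕ} (h : m ≤ m') : initSeg p m <+: initSeg p m' := by
  have : List.range m <+: List.range m' := by
    have := List.take_prefix m (List.range m')
    rwa [List.take_range, Nat.min_eq_left h] at this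
  exact this.map p

lemma getD_prefix {l l' : List ℕ} (h : l <+: l') {i : ℕ} (hi : i < l.length) :
    l.getD i 0 = l'.getD i 0 := by
  obtain ⟨t, rfl⟩ := h
  rw [List.getD_eq_getElem _ _ hi, List.getD_eq_getElem _ _ (by simp; omega),
    List.getElem_append_left hi]

def anyb (P : ℕ → Bool) (n : ℕ) : Bool := (List.range n).foldl (fun b i => b || P i) false

lemma foldl_or (P : ℕ → Bool) (b : Bool) :
    ∀ n, (List.range n).foldl (fun acc i => acc || P i) b = (b || decide (∃ i < n, P i = true))
  | 0 => by simp
  | (n+1) => by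
    rw [List.range_succ, List.foldl_append, foldl_or P b n]
    have h : (∃ i < n + 1, P i = true) ↔ (∃ i < n, P i = true) ∨ P n = true := by
      constructor
      · rintro ⟨i, hi, hP⟩
        rcases Nat.lt_succ_iff_lt_or_eq.mp hi with h | rfl
        · exact Or.inl ⟨i, h, hP⟩
        · exact Or.inr hP
      · rintro (⟨i, hi, hP⟩ | hP)
        · exact ⟨i, Nat.lt_succ_of_lt hi, hP⟩
        · exact ⟨n, Nat.lt_succ_self n, hP⟩
    simp only [h]; simp [Bool.or_assoc]

lemma anyb_eq_true {P : ℕ → Bool} {n : ℕ} : anyb P n = true ↔ ∃ i < n, P i = true := by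
  rw [anyb, foldl_or]; simp



lemma primrec_anyb {α : Type} [Primcodable α] {P : α → ℕ → Bool} {f : α → ℕ}
    (hP : Primrec₂ P) (hf : Primrec f) : Primrec fun a => anyb (P a) (f a) := by
  have h : Primrec fun a => (List.range (f a)).foldl
      (fun s b => (fun a (q : Bool × ℕ) => q.1 || P a q.2) a (s, b)) false :=
    Primrec.list_foldl (Primrec.list_range.comp hf) (Primrec.const false)
      (Primrec.cond (Primrec.fst.comp Primrec.snd) (Primrec.const true)
        (hP.comp Primrec.fst (Primrec.snd.comp Primrec.snd))).to₂
  exact h.of_eq fun a => by rfl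



lemma computableOn_of_local (h : List ℕ → ℕ → ℕ) (hp : Primrec₂ h)
    (loc : ∀ l l' : List ℕ, l <+: l' → ∀ k, k + 2 ≤ l.length → h l k = h l' k)
    (F : Baire → Baire) (hF : ∀ p k, F p k = h (initSeg p (k + 2)) k)
    (D : Set Baire) : ComputableOn F D := by
  refine ⟨fun l => (List.range (l.length - 1)).map (fun k => h l k), ?_, ?_, ?_⟩
  · exact (Primrec.list_map
      (Primrec.list_range.comp (Primrec.nat_sub.comp Primrec.list_length (Primrec.const 1)))
      hp).to_comp
  · intro l l' hll
    have hlen : l.length - 1 ≤ l'.length - 1 := by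
      have := hll.length_le; omega
    have h1 : (List.range (l.length - 1)).map (fun k => h l k)
        = ((List.range (l'.length - 1)).map (fun k => h l' k)).take (l.length - 1) := by
      rw [← List.map_take, List.take_range, Nat.min_eq_left hlen]
      refine List.map_congr_left fun k hk => ?_
      rw [List.mem_range] at hk
      exact loc l l' hll k (by omega)
    show (List.range (l.length - 1)).map (fun k => h l k)
        <+: (List.range (l'.length - 1)).map (fun k => h l' k)
    rw [h1]; exact List.take_prefix _ _
  · intro p _
    constructor
    · intro m i
      have hi : i.1 < m - 1 := by
        have := i.2; simpa [initSeg_length] using this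
      have : ((List.range ((initSeg p m).length - 1)).map (fun k => h (initSeg p m) k)).get i
          = h (initSeg p m) i.1 := by
        simp [List.get_eq_getElem]
      rw [this, hF]
      exact (loc (initSeg p (i.1 + 2)) (initSeg p m)
        (initSeg_prefix p (by omega)) i.1 (by rw [initSeg_length])).symm
    · intro n
      exact ⟨n + 1, by simp [initSeg_length]⟩


def allb (P : ℕ → Bool) (n : ℕ) : Bool := !anyb (fun m => !P m) n

lemma allb_eq_true {P : ℕ → Bool} {n : ℕ} : allb P n = true ↔ ∀ m < n, P m = true := by
  rw [allb, Bool.not_eq_true', Bool.eq_false_iff, Ne, anyb_eq_true]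
  push_neg
  simp

lemma anyb_congr {P Q : ℕ → Bool} {n : ℕ} (h : ∀ i < n, P i = Q i) : anyb P n = anyb Q n := by
  rw [Bool.eq_iff_iff, anyb_eq_true, anyb_eq_true]
  exact ⟨fun ⟨i, hi, hP⟩ => ⟨i, hi, (h i hi) ▸ hP⟩, fun ⟨i, hi, hQ⟩ => ⟨i, hi, (h i hi).symm ▸ hQ⟩⟩

lemma cond_eq_succ {b : Bool} {a n : ℕ} : cond b (a + 1) 0 = n + 1 ↔ b = true ∧ a = n := by
  cases b <;> simp

def h1 (l : List ℕ) (s : ℕ) : ℕ :=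
  cond (allb (fun m => anyb (fun i => decide (l.getD i 0 = m + 1)) (Nat.unpair s).2)
      (Nat.unpair s).1)
    ((Nat.unpair s).1 + 1) 0

def hK1 (l : List ℕ) (_ : ℕ) : ℕ := l.getD 1 0

def h2 (l : List ℕ) (s : ℕ) : ℕ :=
  cond ((!anyb (fun i => decide (l.getD i 0 = (Nat.unpair (Nat.unpair s).1).1 + 1))
        ((Nat.unpair (Nat.unpair s).1).2 + 1))
      || decide ((Nat.unpair (Nat.unpair s).1).1 + 2 ≤ l.getD (Nat.unpair s).2 0))
    ((Nat.unpair s).1 + 1) 0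

def hK2 (l : List ℕ) (_ : ℕ) : ℕ := (Nat.unpair (l.getD 1 0)).1

lemma primrec_allb {α : Type} [Primcodable α] {P : α → ℕ → Bool} {f : α → ℕ}
    (hP : Primrec₂ P) (hf : Primrec f) : Primrec fun a => allb (P a) (f a) :=
  (Primrec.dom_bool (!·)).comp
    (primrec_anyb (((Primrec.dom_bool (!·)).comp (hP.comp Primrec.fst Primrec.snd)).to₂) hf)

lemma primrec_h1 : Primrec₂ h1 := by
  have u1 : Primrec fun x : List ℕ × ℕ => (Nat.unpair x.2).1 :=
    Primrec.fst.comp (Primrec.unpair.comp Primrec.snd)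
  have u2 : Primrec fun x : List ℕ × ℕ => (Nat.unpair x.2).2 :=
    Primrec.snd.comp (Primrec.unpair.comp Primrec.snd)
  have inner : Primrec fun y : (List ℕ × ℕ) × ℕ =>
      anyb (fun i => decide (y.1.1.getD i 0 = y.2 + 1)) (Nat.unpair y.1.2).2 :=
    primrec_anyb
      ((Primrec.eq.comp
        ((Primrec.list_getD 0).comp (Primrec.fst.comp (Primrec.fst.comp Primrec.fst)) Primrec.snd)
        (Primrec.succ.comp (Primrec.snd.comp Primrec.fst))).decide.to₂)
      (Primrec.snd.comp (Primrec.unpair.comp (Primrec.snd.comp (Primrec.fst))))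
  have mid : Primrec fun x : List ℕ × ℕ =>
      allb (fun m => anyb (fun i => decide (x.1.getD i 0 = m + 1)) (Nat.unpair x.2).2)
        (Nat.unpair x.2).1 :=
    primrec_allb inner.to₂ u1
  exact (Primrec.cond mid (Primrec.succ.comp u1) (Primrec.const 0)).to₂

lemma primrec_hK1 : Primrec₂ hK1 :=
  ((Primrec.list_getD 0).comp Primrec.fst (Primrec.const 1)).to₂

lemma primrec_hK2 : Primrec₂ hK2 :=
  ((Primrec.fst.comp (Primrec.unpair.comp
    ((Primrec.list_getD 0).comp Primrec.fst (Primrec.const 1))))).to₂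

lemma primrec_h2 : Primrec₂ h2 := by
  have n1 : Primrec fun x : List ℕ × ℕ => (Nat.unpair (Nat.unpair x.2).1).1 :=
    Primrec.fst.comp (Primrec.unpair.comp (Primrec.fst.comp (Primrec.unpair.comp Primrec.snd)))
  have t1 : Primrec fun x : List ℕ × ℕ => (Nat.unpair (Nat.unpair x.2).1).2 :=
    Primrec.snd.comp (Primrec.unpair.comp (Primrec.fst.comp (Primrec.unpair.comp Primrec.snd)))
  have j1 : Primrec fun x : List ℕ × ℕ => (Nat.unpair x.2).2 :=
    Primrec.snd.comp (Primrec.unpair.comp Primrec.snd)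
  have k1 : Primrec fun x : List ℕ × ℕ => (Nat.unpair x.2).1 :=
    Primrec.fst.comp (Primrec.unpair.comp Primrec.snd)
  have part1 : Primrec fun x : List ℕ × ℕ =>
      !anyb (fun i => decide (x.1.getD i 0 = (Nat.unpair (Nat.unpair x.2).1).1 + 1))
        ((Nat.unpair (Nat.unpair x.2).1).2 + 1) :=
    (Primrec.dom_bool (!·)).comp
      (primrec_anyb
        ((Primrec.eq.comp
          ((Primrec.list_getD 0).comp (Primrec.fst.comp Primrec.fst) Primrec.snd)
          (Primrec.succ.comp (n1.comp Primrec.fst))).decide.to₂)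
        (Primrec.succ.comp t1))
  have part2 : Primrec fun x : List ℕ × ℕ =>
      decide ((Nat.unpair (Nat.unpair x.2).1).1 + 2 ≤ x.1.getD (Nat.unpair x.2).2 0) :=
    (Primrec.nat_le.comp (Primrec.succ.comp (Primrec.succ.comp n1))
      ((Primrec.list_getD 0).comp Primrec.fst j1)).decide
  have cnd : Primrec fun x : List ℕ × ℕ =>
      ((!anyb (fun i => decide (x.1.getD i 0 = (Nat.unpair (Nat.unpair x.2).1).1 + 1))
        ((Nat.unpair (Nat.unpair x.2).1).2 + 1))
      || decide ((Nat.unpair (Nat.unpair x.2).1).1 + 2 ≤ x.1.getD (Nat.unpair x.2).2 0)) :=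
    Primrec.cond part1 (Primrec.const true) part2
  exact (Primrec.cond cnd (Primrec.succ.comp k1) (Primrec.const 0)).to₂



lemma anyb_eq_false {P : ℕ → Bool} {n : ℕ} : anyb P n = false ↔ ¬ ∃ i < n, P i = true := by
  rw [← anyb_eq_true]; cases anyb P n <;> simp

lemma allb_congr {P Q : ℕ → Bool} {n : ℕ} (h : ∀ i < n, P i = Q i) : allb P n = allb Q n := by
  unfold allb
  rw [anyb_congr (fun i hi => by rw [h i hi])]

lemma h1_local {l l' : List ℕ} (h : l <+: l') {k : ℕ} (hk : k + 2 ≤ l.length) :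
    h1 l k = h1 l' k := by
  have ht : (Nat.unpair k).2 ≤ k := Nat.unpair_right_le k
  unfold h1
  rw [allb_congr (fun m _ => anyb_congr fun i hi => by rw [getD_prefix h (by omega)])]

lemma hK1_local {l l' : List ℕ} (h : l <+: l') {k : ℕ} (hk : k + 2 ≤ l.length) :
    hK1 l k = hK1 l' k := by
  unfold hK1
  rw [getD_prefix h (by omega)]

lemma hK2_local {l l' : List ℕ} (h : l <+: l') {k : ℕ} (hk : k + 2 ≤ l.length) :
    hK2 l k = hK2 l' k := by
  unfold hK2
  rw [getD_prefix h (by omega)]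

lemma h2_local {l l' : List ℕ} (h : l <+: l') {k : ℕ} (hk : k + 2 ≤ l.length) :
    h2 l k = h2 l' k := by
  have hk1 : (Nat.unpair k).1 ≤ k := Nat.unpair_left_le k
  have hk2 : (Nat.unpair k).2 ≤ k := Nat.unpair_right_le k
  have ht : (Nat.unpair (Nat.unpair k).1).2 ≤ (Nat.unpair k).1 := Nat.unpair_right_le _
  unfold h2
  rw [getD_prefix h (i := (Nat.unpair k).2) (by omega),
    anyb_congr (fun i hi => by rw [getD_prefix h (by omega)])]

lemma h1_initSeg_eq_succ_iff (p : Baire) (s n : ℕ) :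
    h1 (initSeg p (s + 2)) s = n + 1 ↔
      (Nat.unpair s).1 = n ∧ ∀ m < n, ∃ i < (Nat.unpair s).2, p i = m + 1 := by
  have ht : (Nat.unpair s).2 ≤ s := Nat.unpair_right_le s
  unfold h1
  rw [cond_eq_succ]
  constructor
  · rintro ⟨hb, rfl⟩
    refine ⟨rfl, fun m hm => ?_⟩
    obtain ⟨i, hi, hP⟩ := anyb_eq_true.mp (allb_eq_true.mp hb m hm)
    have h' := of_decide_eq_true hP
    rw [initSeg_getD (show i < s + 2 by omega)] at h'
    exact ⟨i, hi, h'⟩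
  · rintro ⟨rfl, hall⟩
    refine ⟨allb_eq_true.mpr fun m hm => anyb_eq_true.mpr ?_, rfl⟩
    obtain ⟨i, hi, hp⟩ := hall m hm
    exact ⟨i, hi, decide_eq_true (by rw [initSeg_getD (show i < s + 2 by omega)]; exact hp)⟩

lemma h2_initSeg_eq_succ_iff (q : Baire) (s k : ℕ) :
    h2 (initSeg q (s + 2)) s = k + 1 ↔
      (Nat.unpair s).1 = k ∧
        ((¬ ∃ i < (Nat.unpair k).2 + 1, q i = (Nat.unpair k).1 + 1) ∨
          (Nat.unpair k).1 + 2 ≤ q (Nat.unpair s).2) := by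
  have hk1 : (Nat.unpair s).1 ≤ s := Nat.unpair_left_le s
  have hk2 : (Nat.unpair s).2 ≤ s := Nat.unpair_right_le s
  have ht : (Nat.unpair (Nat.unpair s).1).2 ≤ (Nat.unpair s).1 := Nat.unpair_right_le _
  unfold h2
  rw [cond_eq_succ,
    anyb_congr (fun i hi => by rw [initSeg_getD (show i < s + 2 by omega)]),
    initSeg_getD (show (Nat.unpair s).2 < s + 2 by omega),
    Bool.or_eq_true, Bool.not_eq_true', anyb_eq_false]
  constructor
  · rintro ⟨hb, rfl⟩
    refine ⟨rfl, ?_⟩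
    rcases hb with hb | hb
    · exact Or.inl (by simpa using hb)
    · exact Or.inr (by simpa using hb)
  · rintro ⟨rfl, hb⟩
    refine ⟨?_, rfl⟩
    rcases hb with hb | hb
    · exact Or.inl (by simpa using hb)
    · exact Or.inr (by simpa using hb)

lemma bounded_wit (p : Baire) :
    ∀ n : ℕ, (∀ m < n, ∃ i, p i = m + 1) → ∃ t, ∀ m < n, ∃ i < t, p i = m + 1
  | 0, _ => ⟨0, by omega⟩
  | (n+1), h => by
    obtain ⟨t, ht⟩ := bounded_wit p n fun m hm => h m (by omega)
    obtain ⟨i, hi⟩ := h n (by omega)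
    refine ⟨max t (i + 1), fun m hm => ?_⟩
    rcases Nat.lt_succ_iff_lt_or_eq.mp hm with hm | rfl
    · obtain ⟨i', hi', hp⟩ := ht m hm
      exact ⟨i', by omega, hp⟩
    · exact ⟨i, by omega, hi⟩


/-- Closed choice on ℕ is Weihrauch equivalent to `max : ⊆ O(ℕ) → ℕ`. -/
theorem CN_equivW_max : WEquiv repClosedNat repNat repOpenNat repNat CN maxON := by
  constructor
  · -- C_ℕ ≤_W max
    refine ⟨fun p s => h1 (initSeg p (s + 2)) s, fun r k => hK1 (initSeg r (k + 2)) k,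
      computableOn_of_local h1 primrec_h1 (fun l l' h k hk => h1_local h hk) _
        (fun p k => rfl) _, fun G hG => ⟨computableOn_of_local hK1 primrec_hK1
        (fun l l' h k hk => hK1_local h hk) _ (fun p k => rfl) _, ?_⟩⟩
    intro p A hpA hne
    classical
    set U : Set ℕ := {n | ∀ m < n, ∃ i, p i = m + 1} with hUdef
    have hrep : repOpenNat (fun s => h1 (initSeg p (s + 2)) s) U := by
      intro n
      constructor
      · intro hn
        obtain ⟨t, htw⟩ := bounded_wit p n hn
        refine ⟨Nat.pair n t, (h1_initSeg_eq_succ_iff p _ n).mpr ?_⟩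
        rw [Nat.unpair_pair]
        exact ⟨rfl, htw⟩
      · rintro ⟨s, hs⟩
        obtain ⟨_, hall⟩ := (h1_initSeg_eq_succ_iff p s n).mp hs
        intro m hm
        obtain ⟨i, _, hp⟩ := hall m hm
        exact ⟨i, hp⟩
    have hAne : A.Nonempty := hne
    have haA : Nat.find hAne ∈ A := Nat.find_spec hAne
    have hgr : IsGreatest U (Nat.find hAne) := by
      constructor
      · intro m hm
        by_contra hno
        exact absurd ((hpA m).mpr hno) (Nat.find_min hAne hm)
      · intro n hn
        by_contra hna
        push_neg at hna
        exact (hpA _).mp haA (hn _ hna)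
    obtain ⟨y, hy0, hyU⟩ := hG _ U hrep ⟨_, hgr⟩
    refine ⟨Nat.find hAne, ?_, haA⟩
    show hK1 (initSeg (pairB p (G (fun s => h1 (initSeg p (s + 2)) s))) (0 + 2)) 0 = Nat.find hAne
    have e1 : hK1 (initSeg (pairB p (G (fun s => h1 (initSeg p (s + 2)) s))) (0 + 2)) 0
        = pairB p (G (fun s => h1 (initSeg p (s + 2)) s)) 1 := initSeg_getD (by omega)
    rw [e1]
    have e2 : pairB p (G (fun s => h1 (initSeg p (s + 2)) s)) 1
        = G (fun s => h1 (initSeg p (s + 2)) s) 0 := by norm_num [pairB]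
    rw [e2, hy0]
    exact hyU.unique hgr
  · -- max ≤_W C_ℕ
    refine ⟨fun q s => h2 (initSeg q (s + 2)) s, fun r k => hK2 (initSeg r (k + 2)) k,
      computableOn_of_local h2 primrec_h2 (fun l l' h k hk => h2_local h hk) _
        (fun p k => rfl) _, fun G hG => ⟨computableOn_of_local hK2 primrec_hK2
        (fun l l' h k hk => hK2_local h hk) _ (fun p k => rfl) _, ?_⟩⟩
    intro q U hqU hne
    obtain ⟨M, hM⟩ := hne
    set A : Set ℕ := {k | (∃ i < (Nat.unpair k).2 + 1, q i = (Nat.unpair k).1 + 1) ∧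
      ∀ j, q j < (Nat.unpair k).1 + 2} with hAdef
    have hrep : repClosedNat (fun s => h2 (initSeg q (s + 2)) s) A := by
      intro k
      constructor
      · rintro ⟨hex, hub⟩ ⟨s, hs⟩
        obtain ⟨hk', hor⟩ := (h2_initSeg_eq_succ_iff q s k).mp hs
        rcases hor with hno | hbig
        · exact hno hex
        · have := hub ((Nat.unpair s).2); omega
      · intro hns
        have hex : ∃ i < (Nat.unpair k).2 + 1, q i = (Nat.unpair k).1 + 1 := by
          by_contra hno
          exact hns ⟨Nat.pair k 0, (h2_initSeg_eq_succ_iff q _ k).mpr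
            (by rw [Nat.unpair_pair]; exact ⟨rfl, Or.inl hno⟩)⟩
        have hub : ∀ j, q j < (Nat.unpair k).1 + 2 := by
          intro j
          by_contra hj
          push_neg at hj
          exact hns ⟨Nat.pair k j, (h2_initSeg_eq_succ_iff q _ k).mpr
            (by rw [Nat.unpair_pair]; exact ⟨rfl, Or.inr hj⟩)⟩
        exact ⟨hex, hub⟩
    obtain ⟨i₀, hi₀⟩ := (hqU M).mp hM.1
    have hk₀ : Nat.pair M i₀ ∈ A := by
      constructor
      · rw [Nat.unpair_pair]
        exact ⟨i₀, by omega, hi₀⟩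
      · rw [Nat.unpair_pair]
        intro j
        by_contra hj
        push_neg at hj
        have hqj : q j = (q j - 1) + 1 := by omega
        have hmem : (q j - 1) ∈ U := (hqU _).mpr ⟨j, hqj⟩
        have := hM.2 hmem
        omega
    obtain ⟨y, hy0, hyA⟩ := hG _ A hrep ⟨_, hk₀⟩
    have hgr : IsGreatest U (Nat.unpair y).1 := by
      constructor
      · obtain ⟨i, _, hi⟩ := hyA.1
        exact (hqU _).mpr ⟨i, hi⟩
      · intro m hm
        obtain ⟨j, hj⟩ := (hqU m).mp hm
        have := hyA.2 j
        omega
    refine ⟨(Nat.unpair y).1, ?_, hgr⟩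
    show hK2 (initSeg (pairB q (G (fun s => h2 (initSeg q (s + 2)) s))) (0 + 2)) 0
        = (Nat.unpair y).1
    have e1 : (initSeg (pairB q (G (fun s => h2 (initSeg q (s + 2)) s))) (0 + 2)).getD 1 0
        = pairB q (G (fun s => h2 (initSeg q (s + 2)) s)) 1 := initSeg_getD (by omega)
    show (Nat.unpair ((initSeg (pairB q (G (fun s => h2 (initSeg q (s + 2)) s))) (0 + 2)).getD 1 0)).1
        = (Nat.unpair y).1
    rw [e1]
    have e2 : pairB q (G (fun s => h2 (initSeg q (s + 2)) s)) 1
        = G (fun s => h2 (initSeg q (s + 2)) s) 0 := by norm_num [pairB]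
    rw [e2, hy0]


end WL
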